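/- Let δ_{BL}, δ_R > 0 and t ≥ 0. Suppose f, g : [0,∞) → ℝ satisfy 0 ≤ f(ξ) ≤ δ_{BL}/(1+δ_{BL}ξ), |f'(ξ)| ≤ δ_{BL}²/(1+δ_{BL}ξ)², 0 ≤ g(ξ) ≤ δ_R, and 0 ≤ g'(ξ) ≤ δ_R^{1/8}/(1+t)^{7/8} for all ξ ≥ 0. Then ∫₀^t g'(ξ) f(ξ) dξ + ∫_t^∞ |f'(ξ)| g(ξ) dξ ≤ (δ_R^{1/8}/(1+t)^{7/8})·log(1+δ_{BL}t) + δ_{BL}δ_R/(1+δ_{BL}t). -/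

import Mathlib

open MeasureTheory

lemma pos_aux (δBL : ℝ) (hδBL : 0 < δBL) {ξ : ℝ} (hξ : 0 ≤ ξ) : 0 < 1 + δBL * ξ := by
  nlinarith

lemma hasDerivAt_log_aux (δBL : ℝ) (hδBL : 0 < δBL) {ξ : ℝ} (hξ : 0 ≤ ξ) :
    HasDerivAt (fun x => Real.log (1 + δBL * x)) (δBL / (1 + δBL * ξ)) ξ := by
  have h1 : HasDerivAt (fun x : ℝ => 1 + δBL * x) δBL ξ := by
    simpa using ((hasDerivAt_id ξ).const_mul δBL).const_add 1
  have h2 := (Real.hasDerivAt_log (pos_aux δBL hδBL hξ).ne').comp ξ h1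
  simpa [div_eq_inv_mul, Function.comp_def] using h2

lemma hasDerivAt_inv_aux (δBL : ℝ) (hδBL : 0 < δBL) {ξ : ℝ} (hξ : 0 ≤ ξ) :
    HasDerivAt (fun x => -(δBL * (1 + δBL * x)⁻¹)) (δBL ^ 2 / (1 + δBL * ξ) ^ 2) ξ := by
  have h1 : HasDerivAt (fun x : ℝ => 1 + δBL * x) δBL ξ := by
    simpa using ((hasDerivAt_id ξ).const_mul δBL).const_add 1
  have h2 := (h1.inv (pos_aux δBL hδBL hξ).ne').const_mul δBL
  have h3 := h2.neg
  exact h3.congr_deriv (by ring)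

theorem boundary_layer_rarefaction_interaction (δBL δR t : ℝ)
    (hδBL : 0 < δBL) (hδR : 0 < δR) (ht : 0 ≤ t) (f g : ℝ → ℝ)
    (hf : ∀ ξ ≥ (0:ℝ), 0 ≤ f ξ ∧ f ξ ≤ δBL / (1 + δBL * ξ))
    (hf' : ∀ ξ ≥ (0:ℝ), |deriv f ξ| ≤ δBL ^ 2 / (1 + δBL * ξ) ^ 2)
    (hg : ∀ ξ ≥ (0:ℝ), 0 ≤ g ξ ∧ g ξ ≤ δR)
    (hg' : ∀ ξ ≥ (0:ℝ), 0 ≤ deriv g ξ ∧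
      deriv g ξ ≤ δR ^ ((1:ℝ)/8) / (1 + t) ^ ((7:ℝ)/8))
    (hint1 : IntervalIntegrable (fun ξ => deriv g ξ * f ξ) volume 0 t)
    (hint2 : IntegrableOn (fun ξ => |deriv f ξ| * g ξ) (Set.Ioi t)) :
    (∫ ξ in (0:ℝ)..t, deriv g ξ * f ξ) + (∫ ξ in Set.Ioi t, |deriv f ξ| * g ξ)
      ≤ δR ^ ((1:ℝ)/8) / (1 + t) ^ ((7:ℝ)/8) * Real.log (1 + δBL * t)
        + δBL * δR / (1 + δBL * t) := by
  set C : ℝ := δR ^ ((1:ℝ)/8) / (1 + t) ^ ((7:ℝ)/8) with hC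
  have hCpos : 0 ≤ C := by
    apply div_nonneg (Real.rpow_nonneg hδR.le _) (Real.rpow_nonneg (by linarith) _)
  -- continuity of bound function
  have hcontOn : ContinuousOn (fun x : ℝ => δBL / (1 + δBL * x)) (Set.uIcc 0 t) := by
    rw [Set.uIcc_of_le ht]
    apply ContinuousOn.div continuousOn_const (by fun_prop)
    exact fun x hx => (pos_aux δBL hδBL hx.1).ne'
  -- first integral
  have hval1 : (∫ ξ in (0:ℝ)..t, C * (δBL / (1 + δBL * ξ))) = C * Real.log (1 + δBL * t) := by
    rw [intervalIntegral.integral_const_mul]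
    have := intervalIntegral.integral_eq_sub_of_hasDerivAt
      (f := fun x => Real.log (1 + δBL * x)) (f' := fun ξ => δBL / (1 + δBL * ξ))
      (a := 0) (b := t)
      (fun x hx => hasDerivAt_log_aux δBL hδBL (by
        rw [Set.uIcc_of_le ht] at hx; exact hx.1))
      hcontOn.intervalIntegrable
    rw [this]; simp
  have h1 : (∫ ξ in (0:ℝ)..t, deriv g ξ * f ξ) ≤ C * Real.log (1 + δBL * t) := by
    rw [← hval1]
    apply intervalIntegral.integral_mono_on ht hint1
    · exact (continuousOn_const.mul hcontOn).intervalIntegrable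
    · intro x hx
      have hx0 : (0:ℝ) ≤ x := hx.1
      have := hg' x hx0
      have hfx := hf x hx0
      have hpos := pos_aux δBL hδBL hx0
      exact mul_le_mul this.2 hfx.2 hfx.1 hCpos
  -- second integral
  have hderivAt : ∀ x ∈ Set.Ioi t, HasDerivAt (fun x => -(δBL * (1 + δBL * x)⁻¹))
      ((fun ξ => δBL ^ 2 / (1 + δBL * ξ) ^ 2) x) x := by
    intro x hx
    exact hasDerivAt_inv_aux δBL hδBL (le_trans ht (le_of_lt hx))
  have htend : Filter.Tendsto (fun x => -(δBL * (1 + δBL * x)⁻¹)) Filter.atTop (nhds 0) := by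
    have h1 : Filter.Tendsto (fun x : ℝ => 1 + δBL * x) Filter.atTop Filter.atTop :=
      Filter.tendsto_atTop_add_const_left _ 1 (Filter.Tendsto.const_mul_atTop hδBL Filter.tendsto_id)
    have := (h1.inv_tendsto_atTop).const_mul δBL
    simpa using this.neg
  have hnonneg : ∀ x ∈ Set.Ioi t, 0 ≤ δBL ^ 2 / (1 + δBL * x) ^ 2 := by
    intro x hx
    positivity
  have hcontF : ContinuousOn (fun x => -(δBL * (1 + δBL * x)⁻¹)) (Set.Ici t) := by
    apply ContinuousOn.neg
    apply ContinuousOn.mul continuousOn_const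
    exact ContinuousOn.inv₀ (by fun_prop)
      (fun x hx => (pos_aux δBL hδBL (le_trans ht hx)).ne')
  have hintBound : IntegrableOn (fun ξ => δBL ^ 2 / (1 + δBL * ξ) ^ 2) (Set.Ioi t) :=
    integrableOn_Ioi_deriv_of_nonneg (hcontF t Set.self_mem_Ici) hderivAt hnonneg htend
  have hval2 : (∫ ξ in Set.Ioi t, δBL ^ 2 / (1 + δBL * ξ) ^ 2) = δBL / (1 + δBL * t) := by
    rw [integral_Ioi_of_hasDerivAt_of_nonneg (hcontF t Set.self_mem_Ici) hderivAt hnonneg htend]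
    simp [div_eq_mul_inv]
  have h2 : (∫ ξ in Set.Ioi t, |deriv f ξ| * g ξ) ≤ δR * (δBL / (1 + δBL * t)) := by
    have : (∫ ξ in Set.Ioi t, |deriv f ξ| * g ξ)
        ≤ ∫ ξ in Set.Ioi t, δBL ^ 2 / (1 + δBL * ξ) ^ 2 * δR := by
      apply setIntegral_mono_on hint2 (hintBound.mul_const δR) measurableSet_Ioi
      intro x hx
      have hx0 : (0:ℝ) ≤ x := le_trans ht (le_of_lt hx)
      have hgx := hg x hx0
      exact mul_le_mul (hf' x hx0) hgx.2 hgx.1 (hnonneg x hx)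
    rw [integral_mul_const, hval2] at this
    linarith [this]
  have : δR * (δBL / (1 + δBL * t)) = δBL * δR / (1 + δBL * t) := by ring
  linarith [h1, h2, this ▸ h2]
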